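/- Let φ : [0,∞) → ℝ be continuous with φ(x) > 0 for all x ≥ 0. Then there exists an admissible sequence (t_k)_{k∈ℕ} with t_k → ∞ such that the step function f : [0,∞) → ℝ defined by f(x) = t_{k+1} − t_k for x ∈ [t_k, t_{k+1}), k = 0, 1, 2, …, satisfies f(x) < φ(x) for every x ≥ 0. -/
import Mathlib

/-- A sequence `(t k)` of reals is admissible if `t 0 = 0`, it is strictly increasing,
and each successive difference either repeats the previous one or halves it. -/
def Admissible (t : ℕ → ℝ) : Prop :=
  t 0 = 0 ∧ (∀ k, t k < t (k + 1)) ∧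
    ∀ k, t (k + 2) - t (k + 1) = t (k + 1) - t k ∨
      t (k + 2) - t (k + 1) = (1 / 2) * (t (k + 1) - t k)

open scoped Classical in
/-- Auxiliary recursion producing pairs `(t k, d k)`: current point and current step. -/
noncomputable def step3 (φ : ℝ → ℝ) (d0 : ℝ) : ℕ → ℝ × ℝ
  | 0 => (0, d0)
  | k + 1 =>
    let p := step3 φ d0 k
    (p.1 + p.2,
      if ∀ x ∈ Set.Icc (p.1 + p.2) (p.1 + p.2 + 3 * p.2), p.2 < φ x then p.2 else p.2 / 2)

/-- For a continuous function `φ` on `[0,∞)` with `φ > 0` there is an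
admissible sequence `(t k)` tending to `∞` such that the step function `f` with value
`t (k+1) − t k` on `[t k, t (k+1))` satisfies `f x < φ x` for all `x ≥ 0`. -/
theorem stmt3 (φ : ℝ → ℝ) (hφc : ContinuousOn φ (Set.Ici 0))
    (hφpos : ∀ x, 0 ≤ x → 0 < φ x) :
    ∃ (t : ℕ → ℝ) (f : ℝ → ℝ), Admissible t ∧
      Filter.Tendsto t Filter.atTop Filter.atTop ∧
      (∀ k, ∀ x ∈ Set.Ico (t k) (t (k + 1)), f x = t (k + 1) - t k) ∧
      ∀ x, 0 ≤ x → f x < φ x := by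
  classical
  -- a positive lower bound for φ on [0,3]
  obtain ⟨x0, hx0, hx0min⟩ := (isCompact_Icc : IsCompact (Set.Icc (0:ℝ) 3)).exists_isMinOn
    ⟨0, by norm_num⟩ (hφc.mono (by intro x hx; exact hx.1))
  set μ0 : ℝ := φ x0 with hμ0
  have hμ0pos : 0 < μ0 := hφpos x0 hx0.1
  set d0 : ℝ := min 1 μ0 / 4 with hd0
  have hd0pos : 0 < d0 := by positivity
  have hd0le : d0 ≤ 1 / 4 := by
    have : min 1 μ0 ≤ 1 := min_le_left _ _
    simp only [hd0]; linarith
  have hd0lt : d0 < μ0 := by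
    have : min 1 μ0 ≤ μ0 := min_le_right _ _
    simp only [hd0]; linarith
  set t : ℕ → ℝ := fun k => (step3 φ d0 k).1 with ht
  set d : ℕ → ℝ := fun k => (step3 φ d0 k).2 with hd
  have ht0 : t 0 = 0 := rfl
  have hdz : d 0 = d0 := rfl
  have hts : ∀ k, t (k + 1) = t k + d k := fun k => rfl
  have hdef : ∀ k, d (k + 1) =
      if (∀ x ∈ Set.Icc (t k + d k) (t k + d k + 3 * d k), d k < φ x) then d k else d k / 2 :=
    fun k => rfl
  have hds : ∀ k, d (k + 1) = d k ∨ d (k + 1) = d k / 2 := by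
    intro k
    rw [hdef k]
    split
    · exact Or.inl rfl
    · exact Or.inr rfl
  have hdpos : ∀ k, 0 < d k := by
    intro k; induction k with
    | zero => exact hd0pos
    | succ n ih => rcases hds n with h | h <;> rw [h] <;> linarith
  have hdmono : ∀ k, d (k + 1) ≤ d k := by
    intro k
    rcases hds k with h | h
    · rw [h]
    · rw [h]; linarith [hdpos k]
  have hdanti : Antitone d := antitone_nat_of_succ_le hdmono
  have hdle : ∀ k, d k ≤ d0 := fun k => by simpa [hdz] using hdanti (Nat.zero_le k)
  have htmono : StrictMono t := strictMono_nat_of_lt_succ fun k => by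
    rw [hts k]; linarith [hdpos k]
  have htnn : ∀ k, 0 ≤ t k := fun k => by
    rw [← ht0]; exact (htmono.monotone (Nat.zero_le k))
  -- the key invariant
  have hinv : ∀ k, ∀ x ∈ Set.Icc (t k) (t k + 3 * d k), d k < φ x := by
    intro k; induction k with
    | zero =>
      intro x hx
      rw [ht0] at hx; rw [hdz]
      have hx3 : x ∈ Set.Icc (0:ℝ) 3 := ⟨hx.1, by nlinarith [hx.2]⟩
      calc d0 < μ0 := hd0lt
        _ ≤ φ x := hx0min hx3
    | succ n ih =>
      by_cases hP : ∀ x ∈ Set.Icc (t n + d n) (t n + d n + 3 * d n), d n < φ x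
      · have hdn : d (n + 1) = d n := by rw [hdef n, if_pos hP]
        rw [hdn, hts]
        exact hP
      · have hdn : d (n + 1) = d n / 2 := by rw [hdef n, if_neg hP]
        rw [hdn, hts]
        intro x hx
        have hxs : x ∈ Set.Icc (t n) (t n + 3 * d n) :=
          ⟨by linarith [hx.1, hdpos n], by nlinarith [hx.2, hdpos n]⟩
        linarith [ih x hxs, hdpos n]
  -- characterize when the step is kept
  have hkeep : ∀ k, (∀ x ∈ Set.Icc (t (k + 1)) (t (k + 1) + 3 * d k), d k < φ x) →
      d (k + 1) = d k := by
    intro k hP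
    rw [hdef k, if_pos (by rw [hts] at hP; exact hP)]
  -- t tends to infinity
  have htop : Filter.Tendsto t Filter.atTop Filter.atTop := by
    by_contra hcon
    have hbdd : BddAbove (Set.range t) := by
      by_contra hb
      exact hcon (Filter.tendsto_atTop_atTop_of_monotone' htmono.monotone hb)
    obtain ⟨B, hB⟩ := hbdd
    have hBle : ∀ k, t k ≤ B := fun k => hB ⟨k, rfl⟩
    have hB0 : (0:ℝ) ≤ B := le_trans (htnn 0) (hBle 0)
    -- t converges, so d → 0
    have hconv : Filter.Tendsto t Filter.atTop (nhds (⨆ k, t k)) :=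
      tendsto_atTop_ciSup htmono.monotone ⟨B, by rintro y ⟨k, rfl⟩; exact hBle k⟩
    have hconv' : Filter.Tendsto (fun k => t (k + 1)) Filter.atTop (nhds (⨆ k, t k)) :=
      hconv.comp (Filter.tendsto_add_atTop_nat 1)
    have hd0' : Filter.Tendsto d Filter.atTop (nhds 0) := by
      have := hconv'.sub hconv
      simp only [sub_self] at this
      convert this using 2 with k
      rw [hts]; ring
    -- positive lower bound for φ on [0, B+1]
    obtain ⟨y0, hy0, hy0min⟩ := (isCompact_Icc : IsCompact (Set.Icc (0:ℝ) (B + 1))).exists_isMinOn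
      ⟨0, by constructor <;> linarith⟩ (hφc.mono (by intro x hx; exact hx.1))
    have hμpos : 0 < φ y0 := hφpos y0 hy0.1
    obtain ⟨K, hK⟩ := (hd0'.eventually (eventually_lt_nhds hμpos)).exists
    -- from K on, the step stays constant
    have hconst : ∀ n, d (K + n) = d K := by
      intro n; induction n with
      | zero => rfl
      | succ m ih =>
        have hle : d (K + m) ≤ d K := le_of_eq ih
        have : d (K + m + 1) = d (K + m) := by
          apply hkeep
          intro x hx
          have hx1 : 0 ≤ x := le_trans (htnn _) hx.1
          have hx2 : x ≤ B + 1 := by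
            have h1 : t (K + m + 1) ≤ B := hBle _
            have h2 : 3 * d (K + m) ≤ 3 * d0 := by linarith [hdle (K + m)]
            have h3 : (3:ℝ) * d0 ≤ 3 / 4 := by linarith
            linarith [hx.2]
          calc d (K + m) ≤ d K := hle
            _ < φ y0 := hK
            _ ≤ φ x := hy0min ⟨hx1, hx2⟩
        rw [show K + (m + 1) = K + m + 1 from rfl, this, ih]
    have hlin : ∀ n, t (K + n) = t K + n * d K := by
      intro n; induction n with
      | zero => simp
      | succ m ih =>
        rw [show K + (m + 1) = K + m + 1 from rfl, hts, ih, hconst, Nat.cast_succ]; ring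
    obtain ⟨n, hn⟩ := exists_nat_gt ((B - t K) / d K)
    have hdK : 0 < d K := hdpos K
    have : B < t (K + n) := by
      rw [hlin]
      have := (div_lt_iff₀ hdK).mp hn
      linarith
    linarith [hBle (K + n)]
  -- define f via the least k with x < t (k+1)
  have hex : ∀ x : ℝ, ∃ k, x < t (k + 1) := by
    intro x
    obtain ⟨k, hk⟩ := (htop.eventually (Filter.eventually_gt_atTop x)).exists
    exact ⟨k, lt_of_lt_of_le hk (htmono.monotone (Nat.le_succ k))⟩
  set f : ℝ → ℝ := fun x => t (Nat.find (hex x) + 1) - t (Nat.find (hex x)) with hf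
  have hfind_le : ∀ x : ℝ, 0 ≤ x → t (Nat.find (hex x)) ≤ x := by
    intro x hx
    rcases Nat.eq_zero_or_pos (Nat.find (hex x)) with h | h
    · rw [h, ht0]; exact hx
    · obtain ⟨m, hm⟩ := Nat.exists_eq_succ_of_ne_zero (Nat.pos_iff_ne_zero.mp h)
      have := Nat.find_min (hex x) (m := m) (by omega)
      rw [hm]; exact le_of_not_gt this
  refine ⟨t, f, ⟨ht0, fun k => by rw [hts]; linarith [hdpos k], fun k => ?_⟩, htop, ?_, ?_⟩
  · have h1 : t (k + 2) - t (k + 1) = d (k + 1) := by rw [hts]; ring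
    have h2 : t (k + 1) - t k = d k := by rw [hts]; ring
    rcases hds k with h | h
    · left; rw [h1, h2, h]
    · right; rw [h1, h2, h]; ring
  · intro k x hx
    have hk : Nat.find (hex x) = k := by
      rw [Nat.find_eq_iff]
      refine ⟨hx.2, fun j hj => not_lt.mpr ?_⟩
      exact le_trans (htmono.monotone (by omega)) hx.1
    simp only [hf, hk]
  · intro x hx
    set k := Nat.find (hex x) with hkdef
    have h1 : t k ≤ x := hfind_le x hx
    have h2 : x < t (k + 1) := Nat.find_spec (hex x)
    have hfx : f x = d k := by rw [hf]; simp only [← hkdef]; rw [hts]; ring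
    rw [hfx]
    apply hinv k x
    refine ⟨h1, ?_⟩
    rw [hts] at h2
    nlinarith [hdpos k]
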